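/- arXiv:2509.00871 — 2 statements merged into one kernel-verified Lean document; each statement's English description precedes it below -/
import Mathlib

section
/- Every nonempty parabolic biclosed subset of Φ⁺ contains a simple root, i.e., an element of Δ = {α₁, α₂, α₃}. -/
open scoped NNReal

noncomputable section

/-- The ambient vector space `V = ℝ³`. -/
abbrev V : Type := Fin 3 → ℝ

/-- The symmetric bilinear form with `⟨αᵢ,αⱼ⟩ = 1` if `i = j` and `-1` otherwise. -/
def B (x y : V) : ℝ := 2 * (∑ i, x i * y i) - (∑ i, x i) * (∑ i, y i)

/-- The associated quadratic form. -/
def Q (x : V) : ℝ := B x x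

/-- The simple roots `α₁, α₂, α₃` (the standard basis vectors). -/
def α (i : Fin 3) : V := Pi.single i 1

/-- The set of simple roots. -/
def Δ : Set V := Set.range α

/-- `f` is the reflection `r_{αᵢ} : x ↦ x - 2⟨αᵢ,x⟩αᵢ` for some `i` (note `⟨αᵢ,αᵢ⟩ = 1`). -/
def IsSimpleReflection (f : V ≃ₗ[ℝ] V) : Prop :=
  ∃ i : Fin 3, ∀ x : V, f x = x - (2 * B (α i) x) • α i

/-- The group `W ≤ GL(V)` generated by the three simple reflections:
the standard reflection representation of `U₃`. -/
def W : Subgroup (V ≃ₗ[ℝ] V) := Subgroup.closure {f | IsSimpleReflection f}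

/-- The root system `Φ = {w·αᵢ : w ∈ W, i ∈ {1,2,3}}`. -/
def Φ : Set V := {x | ∃ w ∈ W, ∃ i : Fin 3, x = w (α i)}

/-- `Span_{≥0}(X)`: the set of nonnegative linear combinations of elements of `X`. -/
def nnspan (X : Set V) : Set V := (Submodule.span ℝ≥0 X : Set V)

/-- The positive roots `Φ⁺ = Φ ∩ Span_{≥0}(Δ)`. -/
def Φpos : Set V := Φ ∩ nnspan Δ

/-- `R ⊆ Φ⁺` is closed if for all `a, b ∈ R`, `Span_{≥0}{a,b} ∩ Φ⁺ ⊆ R`. -/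
def IsClosedSet (R : Set V) : Prop := ∀ a ∈ R, ∀ b ∈ R, nnspan {a, b} ∩ Φpos ⊆ R

/-- `R` is a biclosed subset of `Φ⁺`. -/
def IsBiclosed (R : Set V) : Prop := R ⊆ Φpos ∧ IsClosedSet R ∧ IsClosedSet (Φpos \ R)

/-- A rank-2 parabolic subsystem `w·(Span{αᵢ,αⱼ} ∩ Φ)`. -/
def IsRank2Parabolic (P : Set V) : Prop :=
  ∃ w ∈ W, ∃ i j : Fin 3, i ≠ j ∧
    P = (fun x => w x) '' ((Submodule.span ℝ {α i, α j} : Set V) ∩ Φ)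

/-- `R'` is closed in the set of positive roots `Φ'pos` of a subsystem. -/
def IsClosedIn (Φ'pos R' : Set V) : Prop := ∀ a ∈ R', ∀ b ∈ R', nnspan {a, b} ∩ Φ'pos ⊆ R'

/-- `R'` is biclosed in the set of positive roots `Φ'pos` of a subsystem. -/
def IsBiclosedIn (Φ'pos R' : Set V) : Prop :=
  R' ⊆ Φ'pos ∧ IsClosedIn Φ'pos R' ∧ IsClosedIn Φ'pos (Φ'pos \ R')

/-- `R ⊆ Φ⁺` is parabolic biclosed if its intersection with every rank-2 parabolic
subsystem `Φ'` is biclosed in `Φ'⁺`. -/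
def IsParabolicBiclosed (R : Set V) : Prop :=
  R ⊆ Φpos ∧ ∀ P, IsRank2Parabolic P → IsBiclosedIn (P ∩ Φpos) (R ∩ P)

open scoped NNReal
noncomputable section
namespace U3

lemma B_expand (x y : V) :
    B x y = 2*(x 0*y 0 + x 1*y 1 + x 2*y 2) - (x 0+x 1+x 2)*(y 0+y 1+y 2) := by
  simp [B, Fin.sum_univ_three]

lemma B_symm (x y : V) : B x y = B y x := by simp [B_expand]; ring

lemma alpha_apply (i k : Fin 3) : α i k = if k = i then 1 else 0 := by
  simp [α, Pi.single_apply]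

lemma alpha_same (i : Fin 3) : α i i = 1 := by simp [alpha_apply]

lemma alpha_ne {i k : Fin 3} (h : k ≠ i) : α i k = 0 := by simp [alpha_apply, h]

lemma B_alpha_same (i : Fin 3) : B (α i) (α i) = 1 := by
  fin_cases i <;> norm_num [B_expand, alpha_apply, Fin.ext_iff]

lemma B_alpha_ne {i j : Fin 3} (h : i ≠ j) : B (α i) (α j) = -1 := by
  fin_cases i <;> fin_cases j <;> first
    | (exact absurd rfl h)
    | norm_num [B_expand, alpha_apply, Fin.ext_iff]

lemma B_add_right (x y z : V) : B x (y + z) = B x y + B x z := by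
  simp [B_expand]; ring

lemma B_smul_right (c : ℝ) (x y : V) : B x (c • y) = c * B x y := by
  simp [B_expand]; ring

lemma B_sub_right (x y z : V) : B x (y - z) = B x y - B x z := by
  simp [B_expand]; ring

lemma B_neg_right (x y : V) : B x (-y) = - B x y := by
  simp [B_expand]; ring

end U3
namespace U3

/-! ### Reflections -/

/-- The simple reflection as a plain function. -/
def rfl' (i : Fin 3) (x : V) : V := x - (2 * B (α i) x) • α i

lemma rfl'_apply (i : Fin 3) (x : V) (k : Fin 3) :
    rfl' i x k = x k - 2 * B (α i) x * α i k := by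
  simp [rfl']

lemma B_rfl' (k i : Fin 3) (x : V) :
    B (α k) (rfl' i x) = B (α k) x - 2 * B (α i) x * B (α k) (α i) := by
  simp only [rfl', B_sub_right, B_smul_right]

lemma B_rfl'_self (i : Fin 3) (x : V) : B (α i) (rfl' i x) = - B (α i) x := by
  rw [B_rfl', B_alpha_same]; ring

lemma rfl'_invol (i : Fin 3) (x : V) : rfl' i (rfl' i x) = x := by
  rw [rfl', B_rfl'_self, rfl']
  module

lemma rfl'_add (i : Fin 3) (x y : V) : rfl' i (x + y) = rfl' i x + rfl' i y := by
  simp only [rfl', B_add_right]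
  module

lemma rfl'_smul (i : Fin 3) (c : ℝ) (x : V) : rfl' i (c • x) = c • rfl' i x := by
  simp only [rfl', B_smul_right]
  module

lemma rfl'_neg (i : Fin 3) (x : V) : rfl' i (-x) = - rfl' i x := by
  simp only [rfl', B_neg_right]
  module

/-- The simple reflection as a linear equivalence. -/
def σe (i : Fin 3) : V ≃ₗ[ℝ] V where
  toFun := rfl' i
  invFun := rfl' i
  left_inv := rfl'_invol i
  right_inv := rfl'_invol i
  map_add' := rfl'_add i
  map_smul' := rfl'_smul i

@[simp] lemma σe_apply (i : Fin 3) (x : V) : σe i x = rfl' i x := rfl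

lemma σe_isSimple (i : Fin 3) : IsSimpleReflection (σe i) := ⟨i, fun _ => rfl⟩

lemma σe_mem_W (i : Fin 3) : σe i ∈ W := Subgroup.subset_closure (σe_isSimple i)

/-- Action of a word on a vector. -/
def act (l : List (Fin 3)) (v : V) : V := l.foldr rfl' v

@[simp] lemma act_nil (v : V) : act [] v = v := Eq.refl v

@[simp] lemma act_cons (i : Fin 3) (l : List (Fin 3)) (v : V) :
    act (i :: l) v = rfl' i (act l v) := Eq.refl _

lemma act_append (l₁ l₂ : List (Fin 3)) (v : V) :
    act (l₁ ++ l₂) v = act l₁ (act l₂ v) := by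
  simp [act, List.foldr_append]

/-- The word as an element of the group. -/
def wEquiv (l : List (Fin 3)) : V ≃ₗ[ℝ] V := (l.map σe).prod

lemma wEquiv_apply (l : List (Fin 3)) (v : V) : wEquiv l v = act l v := by
  induction l with
  | nil => exact Eq.refl v
  | cons i l ih =>
    show ((σe i) * wEquiv l) v = _
    show σe i (wEquiv l v) = _
    rw [ih]; exact Eq.refl _

lemma wEquiv_mem_W (l : List (Fin 3)) : wEquiv l ∈ W := by
  induction l with
  | nil => exact Subgroup.one_mem W
  | cons i l ih => exact Subgroup.mul_mem W (σe_mem_W i) ih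

/-- The root attached to a word. -/
def rho : List (Fin 3) → V
  | [] => 0
  | [j] => α j
  | j :: x :: xs => rfl' j (rho (x :: xs))

@[simp] lemma rho_single (j : Fin 3) : rho [j] = α j := Eq.refl _

lemma rho_cons (j : Fin 3) {L : List (Fin 3)} (h : L ≠ []) :
    rho (j :: L) = rfl' j (rho L) := by
  match L, h with
  | x :: xs, _ => exact Eq.refl _

lemma rho_append (l : List (Fin 3)) {M : List (Fin 3)} (h : M ≠ []) :
    rho (l ++ M) = act l (rho M) := by
  induction l with
  | nil => exact Eq.refl _
  | cons i l ih =>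
    rw [List.cons_append, rho_cons i (by simp [h]), ih, act_cons]

end U3
namespace U3

/-- Key invariant for roots of reduced words. -/
lemma rho_invariant (M : List (Fin 3)) : ∀ j : Fin 3, List.Chain' (· ≠ ·) (j :: M) →
    (∀ i, 0 ≤ rho (j :: M) i) ∧ 1 ≤ rho (j :: M) j ∧ 1 ≤ B (α j) (rho (j :: M)) ∧
      ∀ k, k ≠ j → B (α k) (rho (j :: M)) + B (α j) (rho (j :: M)) ≤ 0 := by
  induction M with
  | nil =>
    intro j _
    refine ⟨fun i => ?_, by simp [alpha_same], by simp [B_alpha_same], fun k hk => ?_⟩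
    · rw [rho_single, alpha_apply]; split <;> norm_num
    · rw [rho_single, B_alpha_same, B_alpha_ne hk]; norm_num
  | cons x xs ih =>
    intro j hch
    rw [List.Chain', List.isChain_cons_cons] at hch
    obtain ⟨hjx, hch'⟩ := hch
    obtain ⟨h1, h2, h3, h4⟩ := ih x hch'
    set ρ' := rho (x :: xs) with hρ'
    have hrho : rho (j :: x :: xs) = rfl' j ρ' := rfl
    set t := B (α j) ρ' with ht
    have htle : t ≤ -1 := by have := h4 j hjx; linarith
    have hcoordj : rho (j :: x :: xs) j = ρ' j - 2 * t := by
      rw [hrho, rfl'_apply, alpha_same]; ring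
    refine ⟨fun i => ?_, ?_, ?_, fun k hk => ?_⟩
    · by_cases hij : i = j
      · subst hij; rw [hcoordj]; have := h1 i; linarith
      · rw [hrho, rfl'_apply, alpha_ne hij]; have := h1 i; linarith
    · rw [hcoordj]; have := h1 j; linarith
    · rw [hrho, B_rfl'_self, ← ht]; linarith
    · rw [hrho, B_rfl'_self, B_rfl', B_alpha_ne hk, ← ht]
      by_cases hkx : k = x
      · subst hkx; have := h4 j hjx; linarith
      · have hk1 : B (α k) ρ' + B (α x) ρ' ≤ 0 := h4 k hkx
        linarith

end U3
namespace U3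

/-- Applying a simple reflection to a reduced-word root gives ± a reduced-word root. -/
lemma rfl'_rho_step (i : Fin 3) (L : List (Fin 3)) (hne : L ≠ [])
    (hch : List.Chain' (· ≠ ·) L) :
    ∃ L', L' ≠ [] ∧ List.Chain' (· ≠ ·) L' ∧
      (rfl' i (rho L) = rho L' ∨ rfl' i (rho L) = - rho L') := by
  match L, hne with
  | j :: M, _ =>
    by_cases hij : i = j
    · subst hij
      match M with
      | [] =>
        refine ⟨[i], by simp, List.isChain_singleton i, Or.inr ?_⟩
        show rfl' i (α i) = - α i
        rw [rfl', B_alpha_same]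
        module
      | x :: xs =>
        refine ⟨x :: xs, by simp, (List.isChain_cons_cons.mp hch).2, Or.inl ?_⟩
        rw [rho_cons i (by simp : (x:: xs) ≠ []), rfl'_invol]
    · refine ⟨i :: j :: M, by simp, List.isChain_cons_cons.mpr ⟨hij, hch⟩, Or.inl ?_⟩
      rw [rho_cons i (by simp : (j :: M) ≠ [])]

/-- Predicate used in closure induction: maps ± reduced roots to ± reduced roots. -/
def MapsRho (f : V ≃ₗ[ℝ] V) : Prop :=
  ∀ L : List (Fin 3), L ≠ [] → List.Chain' (· ≠ ·) L →
    ∃ L', L' ≠ [] ∧ List.Chain' (· ≠ ·) L' ∧ (f (rho L) = rho L' ∨ f (rho L) = - rho L')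

lemma mapsRho_mul {u v : V ≃ₗ[ℝ] V} (hu : MapsRho u) (hv : MapsRho v) :
    MapsRho (u * v) := by
  intro L hne hch
  obtain ⟨L₁, hne₁, hch₁, hv1⟩ := hv L hne hch
  obtain ⟨L₂, hne₂, hch₂, hu1⟩ := hu L₁ hne₁ hch₁
  have happ : (u * v) (rho L) = u (v (rho L)) := rfl
  rcases hv1 with h | h <;> rcases hu1 with h' | h'
  · exact ⟨L₂, hne₂, hch₂, Or.inl (by rw [happ, h, h'])⟩
  · exact ⟨L₂, hne₂, hch₂, Or.inr (by rw [happ, h, h'])⟩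
  · exact ⟨L₂, hne₂, hch₂, Or.inr (by rw [happ, h, map_neg, h'])⟩
  · exact ⟨L₂, hne₂, hch₂, Or.inl (by rw [happ, h, map_neg, h', neg_neg])⟩

lemma mapsRho_of_mem_W {w : V ≃ₗ[ℝ] V} (hw : w ∈ W) : MapsRho w := by
  have main : ∀ w ∈ W, MapsRho w ∧ MapsRho w⁻¹ := by
    intro w hw
    refine Subgroup.closure_induction ?_ ?_ ?_ ?_ hw
    · rintro g ⟨i, hgi⟩
      have hg : ∀ x, g x = rfl' i x := fun x => hgi x
      have hginv : ∀ x, g⁻¹ x = rfl' i x := by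
        intro x
        have h1 : g (rfl' i x) = x := by rw [hg, rfl'_invol]
        show g.symm x = rfl' i x
        rw [g.symm_apply_eq]
        exact h1.symm
      constructor
      · intro L hne hch
        obtain ⟨L', h1, h2, h3⟩ := rfl'_rho_step i L hne hch
        exact ⟨L', h1, h2, by rwa [hg]⟩
      · intro L hne hch
        obtain ⟨L', h1, h2, h3⟩ := rfl'_rho_step i L hne hch
        exact ⟨L', h1, h2, by rwa [hginv]⟩
    · constructor <;>
        [skip; rw [inv_one]] <;>
        exact fun L hne hch => ⟨L, hne, hch, Or.inl rfl⟩
    · rintro a b _ _ ⟨ha, ha'⟩ ⟨hb, hb'⟩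
      exact ⟨mapsRho_mul ha hb, by rw [mul_inv_rev]; exact mapsRho_mul hb' ha'⟩
    · rintro a _ ⟨ha, ha'⟩
      exact ⟨ha', by rwa [inv_inv]⟩
  exact (main w hw).1

/-- Every root is ± a reduced-word root. -/
lemma root_rep {β : V} (hβ : β ∈ Φ) :
    ∃ L, L ≠ [] ∧ List.Chain' (· ≠ ·) L ∧ (β = rho L ∨ β = - rho L) := by
  obtain ⟨w, hw, i, hβ⟩ := hβ
  obtain ⟨L', h1, h2, h3⟩ := mapsRho_of_mem_W hw [i] (by simp) (List.isChain_singleton i)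
  simp only [rho_single] at h3
  exact ⟨L', h1, h2, by rw [hβ]; exact h3⟩

end U3
namespace U3

lemma nnreal_smul_apply (c : ℝ≥0) (x : V) (i : Fin 3) : (c • x) i = (c:ℝ) * x i := by
  simp [NNReal.smul_def]

lemma mem_nnspan_delta {x : V} (hx : ∀ i, 0 ≤ x i) : x ∈ nnspan Δ := by
  have hx3 : x = (⟨x 0, hx 0⟩ : ℝ≥0) • α 0 + (⟨x 1, hx 1⟩ : ℝ≥0) • α 1
      + (⟨x 2, hx 2⟩ : ℝ≥0) • α 2 := by
    funext i
    fin_cases i <;>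
      (norm_num [Pi.add_apply, nnreal_smul_apply, alpha_apply, Fin.ext_iff]; try rfl)
  rw [nnspan, SetLike.mem_coe, hx3]
  have hmem : ∀ i : Fin 3, α i ∈ Submodule.span ℝ≥0 Δ := fun i =>
    Submodule.subset_span ⟨i, rfl⟩
  exact add_mem (add_mem (Submodule.smul_mem _ _ (hmem 0)) (Submodule.smul_mem _ _ (hmem 1)))
    (Submodule.smul_mem _ _ (hmem 2))

lemma nonneg_of_mem_nnspan_delta {x : V} (hx : x ∈ nnspan Δ) : ∀ i, 0 ≤ x i := by
  rw [nnspan, SetLike.mem_coe] at hx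
  induction hx using Submodule.span_induction with
  | mem y hy =>
    obtain ⟨i, rfl⟩ := hy
    intro k; rw [alpha_apply]; split <;> norm_num
  | zero => intro k; simp
  | add y z _ _ hy hz => intro k; have := hy k; have := hz k; simp only [Pi.add_apply]; linarith
  | smul c y _ hy => intro k; rw [nnreal_smul_apply]; exact mul_nonneg c.2 (hy k)

lemma mem_nnspan_pair {x y v : V} {m n : ℝ} (hm : 0 ≤ m) (hn : 0 ≤ n)
    (hv : v = m • x + n • y) : v ∈ nnspan {x, y} := by
  rw [nnspan, SetLike.mem_coe, hv]
  have hx : x ∈ Submodule.span ℝ≥0 ({x, y} : Set V) :=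
    Submodule.subset_span (by simp)
  have hy : y ∈ Submodule.span ℝ≥0 ({x, y} : Set V) :=
    Submodule.subset_span (by simp)
  have h1 : m • x = (⟨m, hm⟩ : ℝ≥0) • x := by
    funext i; simp [nnreal_smul_apply]
  have h2 : n • y = (⟨n, hn⟩ : ℝ≥0) • y := by
    funext i; simp [nnreal_smul_apply]
  rw [h1, h2]
  exact add_mem (Submodule.smul_mem _ _ hx) (Submodule.smul_mem _ _ hy)

lemma alpha_mem_Phi (i : Fin 3) : α i ∈ Φ := ⟨1, Subgroup.one_mem W, i, rfl⟩

lemma rho_mem_Phi (L : List (Fin 3)) (hne : L ≠ []) : rho L ∈ Φ := by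
  rcases List.eq_nil_or_concat L with h | ⟨l, a, rfl⟩
  · exact absurd h hne
  · refine ⟨wEquiv l, wEquiv_mem_W l, a, ?_⟩
    rw [List.concat_eq_append, rho_append l (by simp : ([a] : List (Fin 3)) ≠ []),
      rho_single, wEquiv_apply]

end U3
namespace U3

lemma rfl'_combo {a b : Fin 3} (hab : a ≠ b) (m n : ℝ) :
    rfl' b (m • α a + n • α b) = m • α a + (2*m - n) • α b := by
  have hB : B (α b) (m • α a + n • α b) = n - m := by
    rw [B_add_right, B_smul_right, B_smul_right, B_alpha_same, B_alpha_ne hab.symm]; ring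
  rw [rfl', hB]; module

lemma chain'_append_singleton {l : List (Fin 3)} {a : Fin 3} :
    List.Chain' (· ≠ ·) (l ++ [a]) ↔
      List.Chain' (· ≠ ·) l ∧ ∀ x ∈ l.getLast?, x ≠ a := by
  simp only [List.Chain']
  rw [List.isChain_append]
  simp [List.isChain_singleton]

/-- The stripping lemma: peel letters in `{a, b}` off the right end of `l`. -/
lemma strip : ∀ (N : ℕ) (l : List (Fin 3)), l.length = N → ∀ a b : Fin 3, a ≠ b →
    List.Chain' (· ≠ ·) (l ++ [a]) → ∀ m n : ℝ, 1 ≤ n → n + 1 ≤ m →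
    ∃ (l₀ : List (Fin 3)) (m' n' : ℝ),
      List.Chain' (· ≠ ·) (l₀ ++ [a]) ∧ List.Chain' (· ≠ ·) (l₀ ++ [b]) ∧
      l₀.length ≤ l.length ∧ 0 ≤ m' ∧ 0 ≤ n' ∧
      act l (m • α a + n • α b) = act l₀ (m' • α a + n' • α b) := by
  intro N
  induction N using Nat.strong_induction_on with
  | _ N ih =>
    intro l hlen a b hab hch m n hn hm
    rcases List.eq_nil_or_concat l with rfl | ⟨l', x, rfl⟩
    · exact ⟨[], m, n, by simp [List.Chain', List.isChain_singleton], by simp [List.Chain', List.isChain_singleton],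
        le_refl _, by linarith, by linarith, rfl⟩
    rw [List.concat_eq_append] at *
    have hxa : x ≠ a := by
      rw [chain'_append_singleton] at hch
      exact hch.2 x (by simp)
    have hchl : List.Chain' (· ≠ ·) (l' ++ [x]) := (chain'_append_singleton.mp hch).1
    by_cases hxb : x = b
    · -- strip the letter x = b
      subst hxb
      have hact : act (l' ++ [x]) (m • α a + n • α x)
          = act l' ((2*m - n) • α x + m • α a) := by
        rw [act_append, act_cons, act_nil, rfl'_combo hab]
        have h : m • α a + (2*m - n) • α x = (2*m - n) • α x + m • α a := by module
        rw [h]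
      obtain ⟨l₀, m', n', hc1, hc2, hlen', hm', hn', heq⟩ :=
        ih l'.length (by simp [← hlen]) l' rfl x a hab.symm hchl (2*m - n) m
          (by linarith) (by linarith)
      refine ⟨l₀, n', m', hc2, hc1, by simp; omega, hn', hm', ?_⟩
      rw [hact, heq]
      have h : m' • α x + n' • α a = n' • α a + m' • α x := by module
      rw [h]
    · -- x ∉ {a, b} : stop
      refine ⟨l' ++ [x], m, n, hch, ?_, le_refl _, by linarith, by linarith, rfl⟩
      rw [chain'_append_singleton]
      refine ⟨hchl, ?_⟩
      intro y hy
      simp at hy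
      rw [← hy]
      exact hxb

end U3
namespace U3

lemma act_combo (l : List (Fin 3)) (m n : ℝ) (x y : V) :
    act l (m • x + n • y) = m • act l x + n • act l y := by
  induction l with
  | nil => rfl
  | cons i l ih => rw [act_cons, act_cons, act_cons, ih, rfl'_add, rfl'_smul, rfl'_smul]

lemma rho_nonneg {L : List (Fin 3)} (hne : L ≠ []) (hch : List.Chain' (· ≠ ·) L) :
    ∀ i, 0 ≤ rho L i := by
  match L, hne with
  | j :: M, _ => exact (rho_invariant M j hch).1

lemma rho_head_pos {j : Fin 3} {M : List (Fin 3)} (hch : List.Chain' (· ≠ ·) (j :: M)) :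
    1 ≤ rho (j :: M) j := (rho_invariant M j hch).2.1

lemma rho_mem_Phipos {L : List (Fin 3)} (hne : L ≠ []) (hch : List.Chain' (· ≠ ·) L) :
    rho L ∈ Φpos :=
  ⟨rho_mem_Phi L hne, mem_nnspan_delta (rho_nonneg hne hch)⟩

/-- Every element of `Φpos` is the root of a reduced word. -/
lemma pos_root_rep {β : V} (hβ : β ∈ Φpos) :
    ∃ L, L ≠ [] ∧ List.Chain' (· ≠ ·) L ∧ β = rho L := by
  obtain ⟨hβΦ, hβd⟩ := hβ
  have hpos := nonneg_of_mem_nnspan_delta hβd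
  obtain ⟨L, hne, hch, h | h⟩ := root_rep hβΦ
  · exact ⟨L, hne, hch, h⟩
  · exfalso
    match L, hne with
    | j :: M, _ =>
      have h1 : 1 ≤ rho (j :: M) j := rho_head_pos hch
      have h2 := hpos j
      rw [h] at h2
      simp only [Pi.neg_apply] at h2
      linarith

lemma rfl'_alpha {a b : Fin 3} (hab : a ≠ b) :
    rfl' a (α b) = (2:ℝ) • α a + (1:ℝ) • α b := by
  rw [rfl', B_alpha_ne hab]
  module

theorem main_theorem (R : Set V) (hR : IsParabolicBiclosed R) (hne : R.Nonempty) :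
    ∃ i : Fin 3, α i ∈ R := by
  classical
  set S : Set ℕ := {k | ∃ β ∈ R, ∃ L, L ≠ [] ∧ List.Chain' (· ≠ ·) L ∧ β = rho L ∧
    L.length = k} with hS
  have hSne : S.Nonempty := by
    obtain ⟨β, hβ⟩ := hne
    obtain ⟨L, h1, h2, h3⟩ := pos_root_rep (hR.1 hβ)
    exact ⟨L.length, β, hβ, L, h1, h2, h3, rfl⟩
  obtain ⟨β, hβR, L, hLne, hLch, hβL, hLlen⟩ := Nat.sInf_mem hSne
  by_cases hone : L.length = 1
  · obtain ⟨i, rfl⟩ := List.length_eq_one_iff.mp hone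
    exact ⟨i, by rw [← rho_single i, ← hβL]; exact hβR⟩
  · exfalso
    -- decompose L = l ++ [a, b]
    rcases List.eq_nil_or_concat L with rfl | ⟨L', b, rfl⟩
    · exact hLne rfl
    rcases List.eq_nil_or_concat L' with rfl | ⟨l, a, rfl⟩
    · exact hone (by simp)
    rw [List.concat_eq_append, List.concat_eq_append] at *
    -- basic consequences of reducedness
    have hch_la : List.Chain' (· ≠ ·) (l ++ [a]) := (chain'_append_singleton.mp hLch).1
    have hab : a ≠ b := by
      have := (chain'_append_singleton.mp hLch).2 a (by simp)
      exact this
    -- β = act l (2 α_a + α_b)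
    have hβact : β = act l ((2:ℝ) • α a + (1:ℝ) • α b) := by
      rw [hβL, rho_append (l ++ [a]) (by simp : ([b] : List (Fin 3)) ≠ []), rho_single,
        act_append, act_cons, act_nil, rfl'_alpha hab]
    -- strip
    obtain ⟨l₀, m', n', hc_a, hc_b, hlen0, hm', hn', heq⟩ :=
      strip l.length l rfl a b hab hch_la 2 1 le_rfl (by norm_num)
    set γ₁ : V := act l₀ (α a) with hγ₁
    set γ₂ : V := act l₀ (α b) with hγ₂
    have hγ₁rho : γ₁ = rho (l₀ ++ [a]) := by
      rw [rho_append l₀ (by simp : ([a] : List (Fin 3)) ≠ []), rho_single]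
    have hγ₂rho : γ₂ = rho (l₀ ++ [b]) := by
      rw [rho_append l₀ (by simp : ([b] : List (Fin 3)) ≠ []), rho_single]
    have hβcombo : β = m' • γ₁ + n' • γ₂ := by
      rw [hβact, heq, act_combo]
    -- the parabolic subsystem
    set P : Set V := (fun x => wEquiv l₀ x) ''
      ((Submodule.span ℝ {α a, α b} : Set V) ∩ Φ) with hP
    have hPpar : IsRank2Parabolic P := ⟨wEquiv l₀, wEquiv_mem_W l₀, a, b, hab, rfl⟩
    -- δ and its membership
    set δ : V := m' • α a + n' • α b with hδ
    have hδspan : δ ∈ (Submodule.span ℝ {α a, α b} : Set V) := by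
      rw [SetLike.mem_coe]
      exact add_mem (Submodule.smul_mem _ _ (Submodule.subset_span (by simp)))
        (Submodule.smul_mem _ _ (Submodule.subset_span (by simp)))
    have hδβ : wEquiv l₀ δ = β := by rw [wEquiv_apply, hβact, heq]
    have hδΦ : δ ∈ Φ := by
      refine ⟨(wEquiv l₀)⁻¹ * wEquiv (l ++ [a]), Subgroup.mul_mem _
        (Subgroup.inv_mem _ (wEquiv_mem_W l₀)) (wEquiv_mem_W _), b, ?_⟩
      show δ = (wEquiv l₀).symm (wEquiv (l ++ [a]) (α b))
      rw [wEquiv_apply, act_append, act_cons, act_nil, rfl'_alpha hab, ← hβact, ← hδβ,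
        (wEquiv l₀).symm_apply_apply]
    have hβP : β ∈ P := ⟨δ, ⟨hδspan, hδΦ⟩, hδβ⟩
    have hγ₁P : γ₁ ∈ P :=
      ⟨α a, ⟨Submodule.subset_span (by simp), alpha_mem_Phi a⟩, wEquiv_apply l₀ (α a)⟩
    have hγ₂P : γ₂ ∈ P :=
      ⟨α b, ⟨Submodule.subset_span (by simp), alpha_mem_Phi b⟩, wEquiv_apply l₀ (α b)⟩
    have hγ₁pos : γ₁ ∈ Φpos := by rw [hγ₁rho]; exact rho_mem_Phipos (by simp) hc_a
    have hγ₂pos : γ₂ ∈ Φpos := by rw [hγ₂rho]; exact rho_mem_Phipos (by simp) hc_b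
    -- one of γ₁, γ₂ is in R
    have hor : γ₁ ∈ R ∨ γ₂ ∈ R := by
      by_contra hcon
      push_neg at hcon
      obtain ⟨h₁, h₂⟩ := hcon
      have hbic := (hR.2 P hPpar).2.2
      have hmem1 : γ₁ ∈ (P ∩ Φpos) \ (R ∩ P) :=
        ⟨⟨hγ₁P, hγ₁pos⟩, fun h => h₁ h.1⟩
      have hmem2 : γ₂ ∈ (P ∩ Φpos) \ (R ∩ P) :=
        ⟨⟨hγ₂P, hγ₂pos⟩, fun h => h₂ h.1⟩
      have hβmem : β ∈ nnspan {γ₁, γ₂} ∩ (P ∩ Φpos) :=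
        ⟨mem_nnspan_pair hm' hn' hβcombo, ⟨hβP, hR.1 hβR⟩⟩
      exact (hbic γ₁ hmem1 γ₂ hmem2 hβmem).2 ⟨hβR, hβP⟩
    -- contradiction with minimality
    have hLlen2 : l.length + 2 = sInf S := by simpa using hLlen
    rcases hor with h | h
    · have : (l₀ ++ [a]).length ∈ S :=
        ⟨γ₁, h, l₀ ++ [a], by simp, hc_a, hγ₁rho, rfl⟩
      have := Nat.sInf_le this
      simp at this
      omega
    · have : (l₀ ++ [b]).length ∈ S :=
        ⟨γ₂, h, l₀ ++ [b], by simp, hc_b, hγ₂rho, rfl⟩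
      have := Nat.sInf_le this
      simp at this
      omega

end U3

/-- Every nonempty parabolic biclosed subset of `Φ⁺` contains a simple root. -/
theorem parabolic_biclosed_contains_simple (R : Set V)
    (hR : IsParabolicBiclosed R) (hne : R.Nonempty) :
    ∃ i : Fin 3, α i ∈ R := U3.main_theorem R hR hne
end
end
end

section
/- Let R ⊆ Φ⁺ be a parabolic biclosed set. Then R is finite and nonempty if and only if R = Inv(w) for some w ∈ W with w ≠ id. -/
open scoped NNReal

noncomputable section

/-- The inversion set `Inv(w) = Φ⁺ ∩ w·Φ⁻`, where `Φ⁻ = -Φ⁺`. -/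
def Inversions (w : V ≃ₗ[ℝ] V) : Set V := Φpos ∩ (fun y => w y) '' (-Φpos)

-- Chunk 1: bilinearity, alphas, reflections
lemma B_symm (x y : V) : B x y = B y x := by
  simp [B, Fin.sum_univ_three]; ring

lemma B_add_right (z x y : V) : B z (x + y) = B z x + B z y := by
  simp [B, Fin.sum_univ_three]; ring

lemma B_sub_right (z x y : V) : B z (x - y) = B z x - B z y := by
  simp [B, Fin.sum_univ_three]; ring

lemma B_smul_right (z : V) (c : ℝ) (x : V) : B z (c • x) = c * B z x := by
  simp [B, Fin.sum_univ_three]; ring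

lemma B_add_left (z x y : V) : B (x + y) z = B x z + B y z := by
  simp [B, Fin.sum_univ_three]; ring

lemma B_smul_left (z : V) (c : ℝ) (x : V) : B (c • x) z = c * B x z := by
  simp [B, Fin.sum_univ_three]; ring

lemma B_neg_right (z x : V) : B z (-x) = - B z x := by
  simp [B, Fin.sum_univ_three]; ring

lemma B_sub_left (z x y : V) : B (x - y) z = B x z - B y z := by
  simp [B, Fin.sum_univ_three]; ring

lemma alpha_apply (i c : Fin 3) : α i c = if c = i then 1 else 0 := by
  simp [α, Pi.single_apply]

lemma B_alpha_self (i : Fin 3) : B (α i) (α i) = 1 := by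
  fin_cases i <;> norm_num [B, Fin.sum_univ_three, alpha_apply]

lemma Q_alpha (i : Fin 3) : Q (α i) = 1 := B_alpha_self i

lemma B_alpha_ne {p q : Fin 3} (h : p ≠ q) : B (α p) (α q) = -1 := by
  fin_cases p <;> fin_cases q <;> first
    | exact absurd rfl h
    | (norm_num [B, Fin.sum_univ_three, alpha_apply] <;> decide)

lemma B_alpha_left (i : Fin 3) (x : V) : B (α i) x = 2 * x i - (x 0 + x 1 + x 2) := by
  fin_cases i <;> norm_num [B, Fin.sum_univ_three, alpha_apply] <;> ring

/-- The reflection `r_{αᵢ}` as a linear map. -/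
def sMap (i : Fin 3) : V →ₗ[ℝ] V where
  toFun x := x - (2 * B (α i) x) • α i
  map_add' x y := by
    simp only [B_add_right, mul_add, add_smul]; abel
  map_smul' c x := by
    simp only [B_smul_right, RingHom.id_apply, smul_sub, smul_smul]; ring_nf

lemma sMap_invol (i : Fin 3) : Function.Involutive (sMap i) := by
  intro x
  simp only [sMap, LinearMap.coe_mk, AddHom.coe_mk]
  rw [B_sub_right, B_smul_right, B_alpha_self]
  module

/-- The simple reflections as linear equivalences. -/
def s (i : Fin 3) : V ≃ₗ[ℝ] V := LinearEquiv.ofInvolutive (sMap i) (sMap_invol i)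

lemma s_apply (i : Fin 3) (x : V) : s i x = x - (2 * B (α i) x) • α i := rfl

lemma s_s (i : Fin 3) (x : V) : s i (s i x) = x := sMap_invol i x

lemma s_isSimpleReflection (i : Fin 3) : IsSimpleReflection (s i) := ⟨i, fun _ => rfl⟩

lemma s_mem_W (i : Fin 3) : s i ∈ W := Subgroup.subset_closure (s_isSimpleReflection i)

lemma simpleReflection_eq (f : V ≃ₗ[ℝ] V) (h : IsSimpleReflection f) : ∃ i, f = s i := by
  obtain ⟨i, hi⟩ := h
  exact ⟨i, by ext x; rw [hi x]; rfl⟩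

lemma s_mul_self (i : Fin 3) : s i * s i = 1 :=
  LinearEquiv.ext fun x => s_s i x

lemma s_inv (i : Fin 3) : (s i)⁻¹ = s i := by
  rw [eq_comm, eq_inv_iff_mul_eq_one, s_mul_self]

lemma s_alpha_self (i : Fin 3) : s i (α i) = - α i := by
  rw [s_apply, B_alpha_self]
  module

lemma s_apply_coord (i : Fin 3) (x : V) (c : Fin 3) :
    s i x c = if c = i then 2 * (x 0 + x 1 + x 2) - 3 * x i else x c := by
  rw [s_apply]
  have : (x - (2 * B (α i) x) • α i) c = x c - (2 * B (α i) x) * α i c := rfl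
  rw [this, alpha_apply, B_alpha_left]
  split_ifs with h
  · subst h; ring
  · ring

lemma B_s_s (i : Fin 3) (x y : V) : B (s i x) (s i y) = B x y := by
  rw [s_apply, s_apply]
  simp only [B_sub_left, B_sub_right, B_smul_left, B_smul_right, B_alpha_self]
  rw [B_symm x (α i)]
  ring
-- Chunk 2: words
/-- product of simple reflections along a word -/
def πw (l : List (Fin 3)) : V ≃ₗ[ℝ] V := (l.map s).prod

lemma πw_nil : πw [] = 1 := rfl

lemma πw_cons (i : Fin 3) (t : List (Fin 3)) : πw (i :: t) = s i * πw t := by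
  simp [πw]

lemma πw_append (l l' : List (Fin 3)) : πw (l ++ l') = πw l * πw l' := by
  simp [πw]

lemma πw_cons_apply (i : Fin 3) (t : List (Fin 3)) (x : V) :
    πw (i :: t) x = s i (πw t x) := by rw [πw_cons]; rfl

lemma πw_mem_W (l : List (Fin 3)) : πw l ∈ W := by
  induction l with
  | nil => exact one_mem W
  | cons i t ih => rw [πw_cons]; exact mul_mem (s_mem_W i) ih

lemma πw_reverse (l : List (Fin 3)) : πw l.reverse = (πw l)⁻¹ := by
  induction l with
  | nil => simp [πw_nil]
  | cons i t ih =>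
    rw [List.reverse_cons, πw_append, ih,
      show πw [i] = s i from by rw [πw_cons, πw_nil, mul_one],
      πw_cons, mul_inv_rev, s_inv]

lemma exists_word {w : V ≃ₗ[ℝ] V} (hw : w ∈ W) : ∃ l, πw l = w := by
  induction hw using Subgroup.closure_induction with
  | mem f hf =>
    obtain ⟨i, rfl⟩ := simpleReflection_eq f hf
    exact ⟨[i], by rw [πw_cons, πw_nil, mul_one]⟩
  | one => exact ⟨[], rfl⟩
  | mul x y hx hy ihx ihy =>
    obtain ⟨l, rfl⟩ := ihx; obtain ⟨l', rfl⟩ := ihy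
    exact ⟨l ++ l', πw_append l l'⟩
  | inv x hx ih =>
    obtain ⟨l, rfl⟩ := ih
    exact ⟨l.reverse, πw_reverse l⟩

lemma B_W {w : V ≃ₗ[ℝ] V} (hw : w ∈ W) : ∀ x y, B (w x) (w y) = B x y := by
  induction hw using Subgroup.closure_induction with
  | mem f hf =>
    obtain ⟨i, rfl⟩ := simpleReflection_eq f hf
    exact B_s_s i
  | one => intro x y; rfl
  | mul u v hu hv ihu ihv =>
    intro x y
    calc B ((u * v) x) ((u * v) y) = B (u (v x)) (u (v y)) := rfl
      _ = B (v x) (v y) := ihu _ _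
      _ = B x y := ihv x y
  | inv u hu ih =>
    intro x y
    have := ih (u⁻¹ x) (u⁻¹ y)
    have h2 : u (u⁻¹ x) = x := u.apply_symm_apply x
    have h3 : u (u⁻¹ y) = y := u.apply_symm_apply y
    rw [h2, h3] at this
    exact this.symm

lemma Q_W {w : V ≃ₗ[ℝ] V} (hw : w ∈ W) (x : V) : Q (w x) = Q x := B_W hw x x

lemma W_apply_mem_Φ {w : V ≃ₗ[ℝ] V} (hw : w ∈ W) {x : V} (hx : x ∈ Φ) : w x ∈ Φ := by
  obtain ⟨u, hu, i, rfl⟩ := hx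
  exact ⟨w * u, mul_mem hw hu, i, rfl⟩

lemma alpha_mem_Φ (i : Fin 3) : α i ∈ Φ := ⟨1, one_mem W, i, rfl⟩

lemma neg_mem_Φ {x : V} (hx : x ∈ Φ) : -x ∈ Φ := by
  obtain ⟨u, hu, i, rfl⟩ := hx
  refine ⟨u * s i, mul_mem hu (s_mem_W i), i, ?_⟩
  show -u (α i) = u (s i (α i))
  rw [s_alpha_self, map_neg]

lemma Q_root {x : V} (hx : x ∈ Φ) : Q x = 1 := by
  obtain ⟨u, hu, i, rfl⟩ := hx
  rw [Q_W hu, Q_alpha]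
-- Chunk 3: positivity of canonical roots
lemma alpha_sum (j : Fin 3) : α j 0 + α j 1 + α j 2 = 1 := by
  fin_cases j <;> norm_num [alpha_apply, Fin.ext_iff]

lemma sum_two_le {v : V} (h0 : ∀ c, 0 ≤ v c) {i m : Fin 3} (him : i ≠ m) :
    v i + v m ≤ v 0 + v 1 + v 2 := by
  have h1 : ∑ c ∈ ({i, m} : Finset (Fin 3)), v c = v i + v m := Finset.sum_pair him
  have h2 : ∑ c ∈ ({i, m} : Finset (Fin 3)), v c ≤ ∑ c, v c :=
    Finset.sum_le_sum_of_subset_of_nonneg (Finset.subset_univ _) (fun c _ _ => h0 c)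
  calc v i + v m = ∑ c ∈ ({i, m} : Finset (Fin 3)), v c := h1.symm
    _ ≤ ∑ c, v c := h2
    _ = v 0 + v 1 + v 2 := by rw [Fin.sum_univ_three]

lemma step_lemma {v : V} {i m : Fin 3} (him : i ≠ m) (h0 : ∀ c, 0 ≤ v c)
    (hm : ∀ c, c ≠ m → v c < v m) :
    (∀ c, 0 ≤ s i v c) ∧ (∀ c, c ≠ i → s i v c < s i v i) := by
  have hA : v i + v m ≤ v 0 + v 1 + v 2 := sum_two_le h0 him
  have hvi : v i < v m := hm i him
  have hsi : s i v i = 2 * (v 0 + v 1 + v 2) - 3 * v i := by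
    rw [s_apply_coord]; simp
  constructor
  · intro c
    rw [s_apply_coord]
    split_ifs with hc
    · linarith [h0 i, h0 m]
    · exact h0 c
  · intro c hc
    rw [hsi, s_apply_coord, if_neg hc]
    rcases eq_or_ne c m with rfl | hcm
    · linarith [h0 i, h0 c]
    · linarith [hm c hcm, h0 i, h0 m]

lemma key (l : List (Fin 3)) (j : Fin 3) (hch : (l ++ [j]).Chain' (· ≠ ·)) :
    (l = [] ∧ πw l (α j) = α j) ∨
    (∃ i t, l = i :: t ∧ (∀ c, 0 ≤ πw l (α j) c) ∧
      (∀ c, c ≠ i → πw l (α j) c < πw l (α j) i)) := by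
  induction l with
  | nil => exact Or.inl ⟨rfl, by rw [πw_nil]; rfl⟩
  | cons i t ih =>
    right
    have hch0 : ((i :: t) ++ [j] : List (Fin 3)) = i :: (t ++ [j]) := rfl
    rw [hch0, List.Chain', List.isChain_cons] at hch
    obtain ⟨hne, hch'⟩ := hch
    rcases ih hch' with ⟨ht, heq⟩ | ⟨m, t', ht, h0, hmax⟩
    · subst ht
      have hij : i ≠ j := hne j (by simp)
      have hval : πw [i] (α j) = s i (α j) := by rw [πw_cons_apply, πw_nil]; rfl
      have hco : ∀ c, s i (α j) c = if c = i then 2 else α j c := by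
        intro c
        rw [s_apply_coord]
        have h1 : α j i = 0 := by rw [alpha_apply, if_neg hij]
        rw [alpha_sum, h1]
        split_ifs <;> ring
      refine ⟨i, [], rfl, ?_, ?_⟩
      · intro c
        rw [hval, hco]
        split_ifs with h
        · norm_num
        · rw [alpha_apply]; split_ifs <;> norm_num
      · intro c hc
        rw [hval, hco, hco, if_pos rfl, if_neg hc, alpha_apply]
        split_ifs <;> norm_num
    · subst ht
      have him : i ≠ m := hne m (by simp)
      have h' := step_lemma him h0 hmax
      refine ⟨i, m :: t', rfl, ?_, ?_⟩
      · intro c; rw [πw_cons_apply]; exact h'.1 c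
      · intro c hc; rw [πw_cons_apply, πw_cons_apply]; exact h'.2 c hc

/-- canonical positive roots -/
def canRoot (x : V) : Prop :=
  ∃ l j, (l ++ [j]).Chain' (· ≠ ·) ∧ x = πw l (α j)

lemma canRoot_nonneg {x : V} (hx : canRoot x) : ∀ c, 0 ≤ x c := by
  obtain ⟨l, j, hch, rfl⟩ := hx
  rcases key l j hch with ⟨_, heq⟩ | ⟨i, t, _, h0, _⟩
  · rw [heq]; intro c; rw [alpha_apply]; split_ifs <;> norm_num
  · exact h0

lemma canRoot_posCoord {x : V} (hx : canRoot x) : ∃ c, 0 < x c := by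
  obtain ⟨l, j, hch, rfl⟩ := hx
  rcases key l j hch with ⟨_, heq⟩ | ⟨i, t, _, h0, hmax⟩
  · exact ⟨j, by rw [heq, alpha_apply, if_pos rfl]; norm_num⟩
  · refine ⟨i, ?_⟩
    obtain ⟨c, hc⟩ : ∃ c : Fin 3, c ≠ i := by
      rcases eq_or_ne i 0 with rfl | h
      · exact ⟨1, by decide⟩
      · exact ⟨0, Ne.symm h⟩
    exact lt_of_le_of_lt (h0 c) (hmax c hc)

lemma canRoot_mem_Φ {x : V} (hx : canRoot x) : x ∈ Φ := by
  obtain ⟨l, j, _, rfl⟩ := hx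
  exact ⟨πw l, πw_mem_W l, j, rfl⟩
-- Chunk 4: nnspan characterizations and Φpos
lemma nnsmul_eq (r : ℝ≥0) (v : V) : r • v = (r : ℝ) • v := by
  funext c
  simp [NNReal.smul_def]

lemma mem_nnspan_delta {x : V} : x ∈ nnspan Δ ↔ ∀ c, 0 ≤ x c := by
  constructor
  · intro hx
    have : ∀ y ∈ Submodule.span ℝ≥0 Δ, ∀ c, 0 ≤ y c := by
      intro y hy
      induction hy using Submodule.span_induction with
      | mem z hz =>
        obtain ⟨j, rfl⟩ := hz
        intro c; rw [alpha_apply]; split_ifs <;> norm_num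
      | zero => intro c; norm_num
      | add a b _ _ iha ihb => intro c; exact add_nonneg (iha c) (ihb c)
      | smul r a _ iha =>
        intro c
        have : (r • a) c = (r : ℝ) * a c := by rw [nnsmul_eq]; rfl
        rw [this]
        exact mul_nonneg r.2 (iha c)
    exact this x hx
  · intro h
    have hx : x = ∑ c : Fin 3, (⟨x c, h c⟩ : ℝ≥0) • α c := by
      funext d
      have : ∀ c : Fin 3, ((⟨x c, h c⟩ : ℝ≥0) • α c) d = x c * α c d := fun c => by
        rfl
      rw [Fin.sum_univ_three]
      show x d = _ + _ + _
      rw [this 0, this 1, this 2]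
      fin_cases d <;> norm_num [alpha_apply, Fin.ext_iff] <;> rfl
    rw [hx]
    exact Submodule.sum_mem _ fun c _ =>
      Submodule.smul_mem _ _ (Submodule.subset_span ⟨c, rfl⟩)

lemma mem_nnspan_pair {a b x : V} :
    x ∈ nnspan {a, b} ↔ ∃ r u : ℝ, 0 ≤ r ∧ 0 ≤ u ∧ x = r • a + u • b := by
  show x ∈ (Submodule.span ℝ≥0 {a, b} : Set V) ↔ _
  rw [SetLike.mem_coe, Submodule.mem_span_pair]
  constructor
  · rintro ⟨r, u, h⟩
    exact ⟨r, u, r.2, u.2, by rw [← h, nnsmul_eq, nnsmul_eq]⟩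
  · rintro ⟨r, u, hr, hu, h⟩
    refine ⟨⟨r, hr⟩, ⟨u, hu⟩, ?_⟩
    rw [h]
    rfl

lemma canRoot_mem_Φpos {x : V} (hx : canRoot x) : x ∈ Φpos :=
  ⟨canRoot_mem_Φ hx, mem_nnspan_delta.mpr (canRoot_nonneg hx)⟩

lemma canRoot_s {i : Fin 3} {x : V} (hx : canRoot x) (hne : x ≠ α i) : canRoot (s i x) := by
  obtain ⟨l, j, hch, rfl⟩ := hx
  match l, hch with
  | [], hch =>
    have hij : j ≠ i := by
      intro h; exact hne (by rw [πw_nil, h]; rfl)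
    refine ⟨[i], j, ?_, ?_⟩
    · exact List.isChain_pair.mpr (Ne.symm hij)
    · rw [πw_cons_apply, πw_nil]
  | m :: t, hch =>
    rcases eq_or_ne m i with rfl | hmi
    · refine ⟨t, j, ?_, ?_⟩
      · have : ((m :: t) ++ [j] : List (Fin 3)) = m :: (t ++ [j]) := rfl
        rw [this] at hch
        exact hch.tail
      · rw [πw_cons_apply, s_s]
    · refine ⟨i :: m :: t, j, ?_, ?_⟩
      · have : ((i :: m :: t) ++ [j] : List (Fin 3)) = i :: ((m :: t) ++ [j]) := rfl
        rw [this, List.Chain', List.isChain_cons]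
        exact ⟨fun y hy => by simp at hy; subst hy; exact Ne.symm hmi, hch⟩
      · simp only [πw_cons_apply]

lemma canRoot_or (l : List (Fin 3)) (j : Fin 3) :
    canRoot (πw l (α j)) ∨ canRoot (-(πw l (α j))) := by
  induction l with
  | nil => exact Or.inl ⟨[], j, List.isChain_singleton _, rfl⟩
  | cons i t ih =>
    have happ : πw (i :: t) (α j) = s i (πw t (α j)) := πw_cons_apply i t _
    rcases ih with h | h
    · rcases eq_or_ne (πw t (α j)) (α i) with he | hne
      · right
        rw [happ, he, s_alpha_self, neg_neg]
        exact ⟨[], i, List.isChain_singleton _, rfl⟩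
      · left; rw [happ]; exact canRoot_s h hne
    · rcases eq_or_ne (-(πw t (α j))) (α i) with he | hne
      · left
        have : πw t (α j) = -(α i) := by rw [← he, neg_neg]
        rw [happ, this, map_neg, s_alpha_self, neg_neg]
        exact ⟨[], i, List.isChain_singleton _, rfl⟩
      · right
        rw [happ, ← map_neg]
        exact canRoot_s h hne

lemma Φ_dichotomy {x : V} (hx : x ∈ Φ) : canRoot x ∨ canRoot (-x) := by
  obtain ⟨u, hu, i, rfl⟩ := hx
  obtain ⟨l, rfl⟩ := exists_word hu
  exact canRoot_or l i

lemma Φpos_eq_canRoot : Φpos = {x | canRoot x} := by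
  ext x
  constructor
  · rintro ⟨hxΦ, hxs⟩
    rcases Φ_dichotomy hxΦ with h | h
    · exact h
    · exfalso
      obtain ⟨c, hc⟩ := canRoot_posCoord h
      have : 0 ≤ x c := mem_nnspan_delta.mp hxs c
      have : (-x) c = -(x c) := rfl
      linarith [mem_nnspan_delta.mp hxs c, show (0:ℝ) < -(x c) from this ▸ hc]
  · exact fun h => canRoot_mem_Φpos h

lemma mem_Φpos_iff {x : V} : x ∈ Φpos ↔ canRoot x := by
  rw [Φpos_eq_canRoot]; rfl

lemma Φpos_nonneg {x : V} (hx : x ∈ Φpos) : ∀ c, 0 ≤ x c :=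
  canRoot_nonneg (mem_Φpos_iff.mp hx)

lemma Φpos_neg_not {x : V} (hx : x ∈ Φpos) : -x ∉ Φpos := by
  intro h
  obtain ⟨c, hc⟩ := canRoot_posCoord (mem_Φpos_iff.mp hx)
  have h2 := Φpos_nonneg h c
  have : (-x) c = -(x c) := rfl
  rw [this] at h2
  linarith

lemma s_Φpos {i : Fin 3} {x : V} (hx : x ∈ Φpos) (hne : x ≠ α i) : s i x ∈ Φpos :=
  canRoot_mem_Φpos (canRoot_s (mem_Φpos_iff.mp hx) hne)

lemma alpha_mem_Φpos (i : Fin 3) : α i ∈ Φpos :=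
  canRoot_mem_Φpos ⟨[], i, List.isChain_singleton _, rfl⟩

lemma Φpos_scaled {x : V} (hx : x ∈ Φpos) {t : ℝ} {i : Fin 3} (h : x = t • α i) : x = α i := by
  have hQ : Q x = 1 := Q_root hx.1
  have : Q x = t * t := by
    show B x x = t * t
    rw [h, B_smul_left, B_smul_right, B_alpha_self]; ring
  have ht2 : t * t = 1 := by rw [← this, hQ]
  have hxi : x i = t := by
    rw [h]
    show t * α i i = t
    rw [alpha_apply, if_pos rfl, mul_one]
  have ht0 : 0 ≤ t := hxi ▸ Φpos_nonneg hx i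
  have ht1 : t = 1 := by nlinarith
  rw [h, ht1, one_smul]
-- Chunk 5: inversions
lemma s_symm (i : Fin 3) : (s i).symm = s i := by
  apply LinearEquiv.ext
  intro x
  rw [LinearEquiv.symm_apply_eq, s_s]

lemma mul_symm_apply (u v : V ≃ₗ[ℝ] V) (x : V) : (u * v).symm x = v.symm (u.symm x) := rfl

lemma mem_inversions {w : V ≃ₗ[ℝ] V} {x : V} :
    x ∈ Inversions w ↔ x ∈ Φpos ∧ -(w.symm x) ∈ Φpos := by
  constructor
  · rintro ⟨h1, y, hy, rfl⟩
    refine ⟨h1, ?_⟩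
    rw [w.symm_apply_apply]
    rwa [Set.mem_neg] at hy
  · rintro ⟨h1, h2⟩
    exact ⟨h1, ⟨w.symm x, Set.mem_neg.mpr h2, w.apply_symm_apply x⟩⟩

lemma inversions_subset (w : V ≃ₗ[ℝ] V) : Inversions w ⊆ Φpos := fun _ h => h.1

lemma inversions_one : Inversions (1 : V ≃ₗ[ℝ] V) = ∅ := by
  ext x
  simp only [Set.mem_empty_iff_false, iff_false]
  intro hx
  rw [mem_inversions] at hx
  have : (1 : V ≃ₗ[ℝ] V).symm x = x := rfl
  rw [this] at hx
  exact Φpos_neg_not hx.1 hx.2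

lemma symm_apply_root {u : V ≃ₗ[ℝ] V} (hu : u ∈ W) {x : V} (hx : x ∈ Φ) : u.symm x ∈ Φ := by
  have : u.symm x = (u⁻¹ : V ≃ₗ[ℝ] V) x := rfl
  rw [this]
  exact W_apply_mem_Φ (inv_mem hu) hx

lemma Φ_pos_or_neg {x : V} (hx : x ∈ Φ) : x ∈ Φpos ∨ -x ∈ Φpos := by
  rcases Φ_dichotomy hx with h | h
  · exact Or.inl (canRoot_mem_Φpos h)
  · exact Or.inr (canRoot_mem_Φpos h)

lemma smul_symm_eq (i : Fin 3) (u : V ≃ₗ[ℝ] V) (x : V) :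
    (s i * u).symm x = u.symm (s i x) := by
  rw [mul_symm_apply, s_symm]

lemma inv_rec_subset (i : Fin 3) (u : V ≃ₗ[ℝ] V) :
    Inversions (s i * u) ⊆ insert (α i) ((fun x => s i x) '' Inversions u) := by
  intro x hx
  rw [mem_inversions, smul_symm_eq] at hx
  obtain ⟨hx1, hx2⟩ := hx
  rcases eq_or_ne x (α i) with rfl | hne
  · exact Set.mem_insert _ _
  · refine Set.mem_insert_of_mem _ ⟨s i x, ?_, s_s i x⟩
    rw [mem_inversions]
    exact ⟨s_Φpos hx1 hne, hx2⟩

lemma inv_rec_eq {i : Fin 3} {u : V ≃ₗ[ℝ] V} (hu : u ∈ W) (hα : α i ∉ Inversions u) :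
    Inversions (s i * u) = insert (α i) ((fun x => s i x) '' Inversions u) := by
  apply Set.Subset.antisymm (inv_rec_subset i u)
  intro x hx
  rcases Set.mem_insert_iff.mp hx with rfl | ⟨y, hy, rfl⟩
  · rw [mem_inversions, smul_symm_eq, s_alpha_self, map_neg, neg_neg]
    refine ⟨alpha_mem_Φpos i, ?_⟩
    rcases Φ_pos_or_neg (symm_apply_root hu (alpha_mem_Φ i)) with h | h
    · exact h
    · exfalso
      exact hα (mem_inversions.mpr ⟨alpha_mem_Φpos i, h⟩)
  · rw [mem_inversions, smul_symm_eq, s_s]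
    rw [mem_inversions] at hy
    have hyα : y ≠ α i := fun h => hα (h ▸ mem_inversions.mpr hy)
    exact ⟨s_Φpos hy.1 hyα, hy.2⟩

lemma inversions_finite {w : V ≃ₗ[ℝ] V} (hw : w ∈ W) : (Inversions w).Finite := by
  obtain ⟨l, rfl⟩ := exists_word hw
  induction l with
  | nil => rw [πw_nil, inversions_one]; exact Set.finite_empty
  | cons i t ih =>
    rw [πw_cons]
    exact Set.Finite.subset ((ih (πw_mem_W t)).image _ |>.insert (α i)) (inv_rec_subset i (πw t))

lemma exists_reduced : ∀ (n : ℕ) (l : List (Fin 3)), l.length ≤ n →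
    ∃ l', l'.Chain' (· ≠ ·) ∧ πw l' = πw l ∧ l'.length ≤ l.length := by
  intro n
  induction n with
  | zero =>
    intro l hl
    have : l = [] := List.length_eq_zero_iff.mp (Nat.le_zero.mp hl)
    exact ⟨[], List.isChain_nil, by rw [this], by simp [this]⟩
  | succ n ih =>
    intro l hl
    match l with
    | [] => exact ⟨[], List.isChain_nil, rfl, le_rfl⟩
    | [x] => exact ⟨[x], List.isChain_singleton x, rfl, le_rfl⟩
    | x :: y :: t =>
      rcases eq_or_ne x y with rfl | hxy
      · have hp : πw (x :: x :: t) = πw t := by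
          rw [πw_cons, πw_cons, ← mul_assoc, s_mul_self, one_mul]
        obtain ⟨l', h1, h2, h3⟩ := ih t (by simp at hl ⊢; omega)
        refine ⟨l', h1, by rw [h2, hp], by simp; omega⟩
      · obtain ⟨l', h1, h2, h3⟩ := ih (y :: t) (by simp at hl ⊢; omega)
        have hp : πw (x :: y :: t) = s x * πw l' := by rw [πw_cons, h2]
        match l', h1, h3 with
        | [], _, _ =>
          refine ⟨[x], List.isChain_singleton x, ?_, by simp⟩
          rw [hp, πw_cons, πw_nil]
        | z :: r, h1, h3 =>
          rcases eq_or_ne x z with rfl | hxz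
          · refine ⟨r, h1.tail, ?_, ?_⟩
            · rw [hp, πw_cons, ← mul_assoc, s_mul_self, one_mul]
            · simp at h3 ⊢; omega
          · refine ⟨x :: z :: r, ?_, ?_, ?_⟩
            · rw [List.Chain', List.isChain_cons_cons]
              exact ⟨hxz, h1⟩
            · rw [hp, πw_cons]
            · simp at h3 ⊢; omega

lemma inversions_nonempty {w : V ≃ₗ[ℝ] V} (hw : w ∈ W) (hne : w ≠ 1) :
    (Inversions w).Nonempty := by
  obtain ⟨l, rfl⟩ := exists_word hw
  obtain ⟨l', hch, heq, _⟩ := exists_reduced l.length l le_rfl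
  have hl' : l' ≠ [] := by
    rintro rfl
    exact hne (by rw [← heq, πw_nil])
  obtain ⟨t, j, rfl⟩ : ∃ t j, l' = t ++ [j] := by
    rcases List.eq_nil_or_concat l' with h | ⟨t, j, h⟩
    · exact absurd h hl'
    · exact ⟨t, j, by rw [h, List.concat_eq_append]⟩
  refine ⟨πw t (α j), ?_⟩
  rw [← heq, mem_inversions]
  constructor
  · exact canRoot_mem_Φpos ⟨t, j, hch, rfl⟩
  · have hsplit : πw (t ++ [j]) = πw t * s j := by
      rw [πw_append, πw_cons, πw_nil, mul_one]
    rw [hsplit, mul_symm_apply, (πw t).symm_apply_apply, s_symm, s_alpha_self, neg_neg]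
    exact alpha_mem_Φpos j
-- Chunk 6: depth and existence of a simple root in R
/-- alternating word of length m starting with p -/
def altw : Fin 3 → Fin 3 → ℕ → List (Fin 3)
  | _, _, 0 => []
  | p, q, (m+1) => p :: altw q p m

/-- the letter following the alternating word -/
def alte : Fin 3 → Fin 3 → ℕ → Fin 3
  | p, _, 0 => p
  | p, q, (m+1) => alte q p m

/-- the dihedral roots `(m+1)c + md` -/
def θv (c d : V) (m : ℕ) : V := ((m : ℝ) + 1) • c + (m : ℝ) • d

lemma altw_length (p q : Fin 3) (m : ℕ) : (altw p q m).length = m := by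
  induction m generalizing p q with
  | zero => rfl
  | succ m ih => simp [altw, ih]

lemma B_alpha_theta {p q : Fin 3} (h : p ≠ q) (m : ℕ) :
    B (α p) (θv (α q) (α p) m) = -1 := by
  rw [θv, B_add_right, B_smul_right, B_smul_right, B_alpha_self, B_alpha_ne h]
  ring

lemma s_theta {p q : Fin 3} (h : p ≠ q) (m : ℕ) :
    s p (θv (α q) (α p) m) = θv (α p) (α q) (m+1) := by
  rw [s_apply, B_alpha_theta h, θv, θv]
  push_cast
  module

lemma theta_word {p q : Fin 3} (h : p ≠ q) (m : ℕ) :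
    πw (altw p q m) (α (alte p q m)) = θv (α p) (α q) m := by
  induction m generalizing p q with
  | zero =>
    show α p = θv (α p) (α q) 0
    rw [θv]
    push_cast
    module
  | succ m ih =>
    show πw (p :: altw q p m) (α (alte q p m)) = _
    rw [πw_cons_apply, ih h.symm, s_theta h]

lemma alt_full_head (p q : Fin 3) (m : ℕ) :
    (altw p q m ++ [alte p q m]).head? = some p := by
  cases m with
  | zero => rfl
  | succ m => rfl

lemma alt_chain {p q : Fin 3} (h : p ≠ q) (m : ℕ) :
    (altw p q m ++ [alte p q m]).Chain' (· ≠ ·) := by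
  induction m generalizing p q with
  | zero => exact List.isChain_singleton p
  | succ m ih =>
    show (p :: (altw q p m ++ [alte q p m])).Chain' (· ≠ ·)
    rw [List.Chain', List.isChain_cons]
    refine ⟨?_, ih h.symm⟩
    intro y hy
    rw [alt_full_head q p m] at hy
    simp at hy
    subst hy
    exact h

lemma decomp : ∀ (L : List (Fin 3)), L.Chain' (· ≠ ·) → 2 ≤ L.length →
    ∃ (l₀ : List (Fin 3)) (p q : Fin 3) (m : ℕ), p ≠ q ∧ 1 ≤ m ∧
      L = l₀ ++ (altw p q m ++ [alte p q m]) ∧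
      (∀ z ∈ l₀.getLast?, z ≠ p ∧ z ≠ q) := by
  intro L
  induction L with
  | nil => intro _ h; simp at h
  | cons x t ih =>
    intro hch hlen
    rw [List.Chain', List.isChain_cons] at hch
    obtain ⟨hne, hch'⟩ := hch
    match t, hne, hch', hlen with
    | [y], hne, _, _ =>
      have hxy : x ≠ y := hne y rfl
      refine ⟨[], x, y, 1, hxy, le_rfl, ?_, by simp⟩
      rfl
    | y :: z :: t', hne, hch', _ =>
      obtain ⟨l₀, p, q, m, hpq, hm, heq, hlast⟩ := ih hch' (by simp)
      match l₀, heq, hlast with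
      | [], heq, _ =>
        have hhead : p = y := by
          have h2 : (y :: z :: t').head? = some p := by
            rw [heq]
            simpa using alt_full_head p q m
          simpa using h2.symm
        have hxp : x ≠ p := by
          intro hc
          exact hne y rfl (by rw [hc, hhead])
        rcases eq_or_ne x q with hxq | hxq
        · subst hxq
          refine ⟨[], x, p, m + 1, hxp, by omega, ?_, by simp⟩
          show x :: (y :: z :: t') = (x :: altw p x m) ++ [alte p x m]
          rw [heq]
          rfl
        · refine ⟨[x], p, q, m, hpq, hm, ?_, ?_⟩
          · show x :: (y :: z :: t') = [x] ++ (altw p q m ++ [alte p q m])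
            rw [heq]
            rfl
          · intro w hw
            simp at hw
            subst hw
            exact ⟨hxp, hxq⟩
      | u :: l₀', heq, hlast =>
        refine ⟨x :: u :: l₀', p, q, m, hpq, hm, ?_, ?_⟩
        · show x :: (y :: z :: t') = x :: ((u :: l₀') ++ (altw p q m ++ [alte p q m]))
          rw [heq]
        · intro w hw
          have hgl : (x :: u :: l₀').getLast? = (u :: l₀').getLast? := by
            rw [List.getLast?_cons_cons]
          rw [hgl] at hw
          exact hlast w hw

/-- depth: length of canonical words for x -/
def dSet (x : V) : Set ℕ :=
  {n | ∃ l j, (l ++ [j]).Chain' (· ≠ ·) ∧ x = πw l (α j) ∧ n = l.length}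

def dp (x : V) : ℕ := sInf (dSet x)

lemma dSet_nonempty {x : V} (hx : x ∈ Φpos) : (dSet x).Nonempty := by
  obtain ⟨l, j, hch, rfl⟩ := mem_Φpos_iff.mp hx
  exact ⟨l.length, l, j, hch, rfl, rfl⟩

lemma dp_mem {x : V} (hx : x ∈ Φpos) : dp x ∈ dSet x := Nat.sInf_mem (dSet_nonempty hx)

lemma dp_le {x : V} {n : ℕ} (hn : n ∈ dSet x) : dp x ≤ n := Nat.sInf_le hn

lemma theta_mem_span_inter (p q : Fin 3) (hpq : p ≠ q) (k : ℕ) :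
    θv (α p) (α q) k ∈ (Submodule.span ℝ {α p, α q} : Set V) ∩ Φ := by
  constructor
  · exact Submodule.mem_span_pair.mpr ⟨(k : ℝ) + 1, (k : ℝ), rfl⟩
  · rw [← theta_word hpq k]
    exact ⟨πw (altw p q k), πw_mem_W _, alte p q k, rfl⟩

lemma alphaq_mem_span_inter (p q : Fin 3) :
    α q ∈ (Submodule.span ℝ {α p, α q} : Set V) ∩ Φ := by
  constructor
  · exact Submodule.mem_span_pair.mpr ⟨0, 1, by module⟩
  · exact alpha_mem_Φ q

lemma exists_simple {R : Set V} (hpb : IsParabolicBiclosed R) (hne : R.Nonempty) :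
    ∃ i, α i ∈ R := by
  have hDne : (dp '' R).Nonempty := hne.image dp
  obtain ⟨β, hβR, hβd⟩ := Nat.sInf_mem hDne
  have hmin : ∀ y ∈ R, dp β ≤ dp y := by
    intro y hy
    rw [hβd]
    exact Nat.sInf_le ⟨y, hy, rfl⟩
  obtain ⟨l, j, hch, hβeq, hlen⟩ := dp_mem (hpb.1 hβR)
  match l, hch, hβeq, hlen with
  | [], _, hβeq, _ =>
    refine ⟨j, ?_⟩
    have : β = α j := by rw [hβeq, πw_nil]; rfl
    rwa [← this]
  | x :: t, hch, hβeq, hlen =>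
    exfalso
    obtain ⟨l₀, p, q, m, hpq, hm, heq, hlast⟩ := decomp ((x :: t) ++ [j]) hch (by simp)
    obtain ⟨m', rfl⟩ : ∃ m', m = m' + 1 := ⟨m - 1, by omega⟩
    have hsplit : x :: t = l₀ ++ altw p q (m' + 1) ∧ j = alte p q (m' + 1) := by
      have h1 : (x :: t) ++ [j] = (l₀ ++ altw p q (m' + 1)) ++ [alte p q (m' + 1)] := by
        rw [heq, List.append_assoc]
      have h2 := List.append_inj' h1 rfl
      exact ⟨h2.1, by simpa using h2.2⟩
    obtain ⟨hl, hj⟩ := hsplit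
    have hl₀chain : l₀.Chain' (· ≠ ·) := by
      have hc := heq ▸ hch
      rw [List.Chain', List.isChain_append] at hc
      exact hc.1
    -- β in terms of θv
    have happlyβ : πw (l₀ ++ altw p q (m' + 1)) (α (alte p q (m' + 1)))
        = πw l₀ (θv (α p) (α q) (m' + 1)) := by
      rw [πw_append]
      show πw l₀ (πw (altw p q (m' + 1)) (α (alte p q (m' + 1)))) = _
      rw [theta_word hpq]
    have hβ : β = πw l₀ (θv (α p) (α q) (m' + 1)) := by
      rw [hβeq, hl, hj, happlyβ]
    -- chain for the smaller alternating word
    have hch_a : ((l₀ ++ altw p q m') ++ [alte p q m']).Chain' (· ≠ ·) := by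
      rw [List.append_assoc, List.Chain', List.isChain_append]
      refine ⟨hl₀chain, alt_chain hpq m', ?_⟩
      intro z hz y hy
      rw [alt_full_head p q m'] at hy
      simp at hy
      subst hy
      exact (hlast z hz).1
    have hch_b : (l₀ ++ [q]).Chain' (· ≠ ·) := by
      rw [List.Chain', List.isChain_append]
      refine ⟨hl₀chain, List.isChain_singleton q, ?_⟩
      intro z hz y hy
      simp at hy
      subst hy
      exact (hlast z hz).2
    have happly_a : πw (l₀ ++ altw p q m') (α (alte p q m'))
        = πw l₀ (θv (α p) (α q) m') := by
      rw [πw_append]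
      show πw l₀ (πw (altw p q m') (α (alte p q m'))) = _
      rw [theta_word hpq]
    set a := πw l₀ (θv (α p) (α q) m') with ha
    set b := πw l₀ (α q) with hb
    have haCan : canRoot a := ⟨l₀ ++ altw p q m', alte p q m', hch_a, happly_a.symm⟩
    have hbCan : canRoot b := ⟨l₀, q, hch_b, rfl⟩
    have hda : dp a ≤ l₀.length + m' :=
      dp_le ⟨l₀ ++ altw p q m', alte p q m', hch_a, happly_a.symm,
        by simp [altw_length]⟩
    have hdb : dp b ≤ l₀.length := dp_le ⟨l₀, q, hch_b, rfl, rfl⟩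
    -- dp β = l₀.length + m' + 1
    have hdβ : dp β = l₀.length + (m' + 1) := by
      rw [hlen, hl]
      simp [altw_length]
    -- a, b not in R
    have haR : a ∉ R := fun hc => by
      have := hmin a hc
      omega
    have hbR : b ∉ R := fun hc => by
      have := hmin b hc
      omega
    -- the parabolic subsystem
    set Q := (fun z => πw l₀ z) '' ((Submodule.span ℝ {α p, α q} : Set V) ∩ Φ) with hQdef
    have hQ : IsRank2Parabolic Q := ⟨πw l₀, πw_mem_W l₀, p, q, hpq, rfl⟩
    have haQ : a ∈ Q := ⟨θv (α p) (α q) m', theta_mem_span_inter p q hpq m', rfl⟩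
    have hbQ : b ∈ Q := ⟨α q, alphaq_mem_span_inter p q, rfl⟩
    have hβQ : β ∈ Q := ⟨θv (α p) (α q) (m' + 1), theta_mem_span_inter p q hpq (m' + 1), hβ.symm⟩
    -- the convex combination
    have hm1 : (m' : ℝ) + 1 ≠ 0 := by positivity
    have hin : θv (α p) (α q) (m' + 1)
        = (((m' : ℝ) + 2)/((m' : ℝ) + 1)) • θv (α p) (α q) m' + ((1 : ℝ)/((m' : ℝ) + 1)) • α q := by
      rw [θv, θv]
      push_cast
      match_scalars
      · field_simp
        ring
      · field_simp
        ring
    have hcomb : β = (((m' : ℝ) + 2)/((m' : ℝ) + 1)) • a + ((1 : ℝ)/((m' : ℝ) + 1)) • b := by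
      rw [hβ, hin, map_add, map_smul, map_smul]
    have hnn : β ∈ nnspan {a, b} :=
      mem_nnspan_pair.mpr ⟨_, _, by positivity, by positivity, hcomb⟩
    -- conclude with coclosedness
    have hbi := (hpb.2 Q hQ).2.2
    have haN : a ∈ (Q ∩ Φpos) \ (R ∩ Q) :=
      ⟨⟨haQ, canRoot_mem_Φpos haCan⟩, fun h => haR h.1⟩
    have hbN : b ∈ (Q ∩ Φpos) \ (R ∩ Q) :=
      ⟨⟨hbQ, canRoot_mem_Φpos hbCan⟩, fun h => hbR h.1⟩
    have hβN := hbi a haN b hbN ⟨hnn, hβQ, hpb.1 hβR⟩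
    exact hβN.2 ⟨hβR, hβQ⟩
-- Chunk 7: reflecting a parabolic biclosed set
lemma image_Φ_eq {w : V ≃ₗ[ℝ] V} (hw : w ∈ W) : (fun x => w x) '' Φ = Φ := by
  apply Set.Subset.antisymm
  · rintro _ ⟨y, hy, rfl⟩
    exact W_apply_mem_Φ hw hy
  · intro x hx
    exact ⟨w.symm x, symm_apply_root hw hx, w.apply_symm_apply x⟩

lemma parabolic_neg {P : Set V} (hP : IsRank2Parabolic P) : ∀ x ∈ P, -x ∈ P := by
  obtain ⟨w, hw, p, q, hpq, rfl⟩ := hP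
  rintro _ ⟨y, ⟨hy1, hy2⟩, rfl⟩
  exact ⟨-y, ⟨neg_mem hy1, neg_mem_Φ hy2⟩, map_neg _ y⟩

lemma parabolic_image {P : Set V} (hP : IsRank2Parabolic P) {u : V ≃ₗ[ℝ] V} (hu : u ∈ W) :
    IsRank2Parabolic ((fun x => u x) '' P) := by
  obtain ⟨w, hw, p, q, hpq, rfl⟩ := hP
  refine ⟨u * w, mul_mem hu hw, p, q, hpq, ?_⟩
  rw [Set.image_image]
  rfl

lemma parabolic_span {P : Set V} (hP : IsRank2Parabolic P) :
    ∃ c d : V, P = (Submodule.span ℝ {c, d} : Set V) ∩ Φ := by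
  obtain ⟨w, hw, p, q, hpq, rfl⟩ := hP
  refine ⟨w (α p), w (α q), ?_⟩
  rw [Set.image_inter w.injective, image_Φ_eq hw]
  congr 1
  have : (fun x => w x) '' (Submodule.span ℝ {α p, α q} : Set V)
      = (Submodule.map (w : V →ₗ[ℝ] V) (Submodule.span ℝ {α p, α q}) : Set V) := by
    rfl
  rw [this, Submodule.map_span]
  congr 1
  rw [Set.image_pair]
  rfl

lemma alpha_not_combo {i : Fin 3} {a b : V} (ha : a ∈ Φpos) (hb : b ∈ Φpos)
    (ha' : a ≠ α i) (hb' : b ≠ α i) {r u : ℝ} (hr : 0 ≤ r) (hu : 0 ≤ u) :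
    α i ≠ r • a + u • b := by
  intro h
  have hcoord : ∀ c, α i c = r * a c + u * b c := fun c => congrFun h c
  rcases eq_or_lt_of_le hr with hr0 | hr0
  · -- r = 0
    rcases eq_or_lt_of_le hu with hu0 | hu0
    · have := hcoord i
      rw [alpha_apply, if_pos rfl, ← hr0, ← hu0] at this
      norm_num at this
    · apply hb'
      have hub : u • b = α i := by
        funext c
        have hcc := hcoord c
        rw [← hr0] at hcc
        show u * b c = α i c
        rw [hcc]; ring
      apply Φpos_scaled hb (t := u⁻¹)
      rw [← hub, inv_smul_smul₀ (ne_of_gt hu0)]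
  · -- r > 0 : a is supported on coordinate i only
    apply ha'
    apply Φpos_scaled ha (t := a i)
    funext c
    rcases eq_or_ne c i with rfl | hci
    · show a c = a c * α c c
      rw [alpha_apply, if_pos rfl, mul_one]
    · have h0 : α i c = 0 := by rw [alpha_apply, if_neg hci]
      have hac : a c = 0 := by
        have h1 := hcoord c
        rw [h0] at h1
        have h2 : 0 ≤ r * a c := mul_nonneg (le_of_lt hr0) (Φpos_nonneg ha c)
        have h3 : 0 ≤ u * b c := mul_nonneg hu (Φpos_nonneg hb c)
        have h4 : r * a c = 0 := by linarith
        rcases mul_eq_zero.mp h4 with h | h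
        · exact absurd h (ne_of_gt hr0)
        · exact h
      rw [hac]
      show (0:ℝ) = a i * α i c
      rw [h0, mul_zero]

lemma biclosedIn_image (g : V ≃ₗ[ℝ] V) {A T : Set V} (h : IsBiclosedIn A T) :
    IsBiclosedIn ((fun x => g x) '' A) ((fun x => g x) '' T) := by
  obtain ⟨hsub, hcl, hcc⟩ := h
  refine ⟨Set.image_mono hsub, ?_, ?_⟩
  · rintro _ ⟨a, haT, rfl⟩ _ ⟨b, hbT, rfl⟩ x ⟨hx1, hx2⟩
    obtain ⟨r, u, hr, hu, hx⟩ := mem_nnspan_pair.mp hx1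
    obtain ⟨y, hyA, rfl⟩ := hx2
    have hy : y = r • a + u • b := by
      apply g.injective
      rw [map_add, map_smul, map_smul]
      simpa using hx
    exact ⟨y, hcl a haT b hbT ⟨mem_nnspan_pair.mpr ⟨r, u, hr, hu, hy⟩, hyA⟩, rfl⟩
  · have hAT : (fun x => g x) '' A \ (fun x => g x) '' T = (fun x => g x) '' (A \ T) :=
      (Set.image_diff g.injective A T).symm
    rw [hAT]
    rintro _ ⟨a, haT, rfl⟩ _ ⟨b, hbT, rfl⟩ x ⟨hx1, hx2⟩
    obtain ⟨r, u, hr, hu, hx⟩ := mem_nnspan_pair.mp hx1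
    obtain ⟨y, hyA, rfl⟩ := hx2
    have hy : y = r • a + u • b := by
      apply g.injective
      rw [map_add, map_smul, map_smul]
      simpa using hx
    exact ⟨y, hcc a haT b hbT ⟨mem_nnspan_pair.mpr ⟨r, u, hr, hu, hy⟩, hyA⟩, rfl⟩

lemma reflect_pb {R : Set V} (hpb : IsParabolicBiclosed R) {i : Fin 3} (hi : α i ∈ R) :
    IsParabolicBiclosed ((fun x => s i x) '' (R \ {α i})) := by
  have hR'sub : (fun x => s i x) '' (R \ {α i}) ⊆ Φpos := by
    rintro _ ⟨y, ⟨hyR, hy⟩, rfl⟩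
    exact s_Φpos (hpb.1 hyR) (by simpa using hy)
  refine ⟨hR'sub, ?_⟩
  intro P hP
  by_cases hαP : α i ∈ P
  · -- Case 2 : the parabolic contains α i, hence is stable under s i
    obtain ⟨c, d, hPcd⟩ := parabolic_span hP
    have hPstable : ∀ x ∈ P, s i x ∈ P := by
      intro x hx
      rw [hPcd] at hx hαP ⊢
      refine ⟨?_, W_apply_mem_Φ (s_mem_W i) hx.2⟩
      rw [s_apply]
      exact sub_mem hx.1 (Submodule.smul_mem _ _ hαP.1)
    have hbi := hpb.2 P hP
    have hiT : α i ∈ R ∩ P := ⟨hi, hαP⟩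
    have hT' : ((fun x => s i x) '' (R \ {α i})) ∩ P
        = (fun x => s i x) '' ((R ∩ P) \ {α i}) := by
      apply Set.Subset.antisymm
      · rintro x ⟨hx1, hx2⟩
        obtain ⟨y, ⟨hyR, hyα⟩, rfl⟩ := hx1
        refine ⟨y, ⟨⟨hyR, ?_⟩, hyα⟩, rfl⟩
        have hyy : y = s i (s i y) := (s_s i y).symm
        rw [hyy]
        exact hPstable _ hx2
      · rintro _ ⟨y, ⟨⟨hyR, hyP⟩, hyα⟩, rfl⟩
        exact ⟨⟨y, ⟨hyR, hyα⟩, rfl⟩, hPstable y hyP⟩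
    rw [hT']
    obtain ⟨hTsub, hTcl, hTcc⟩ := hpb.2 P hP
    have hsne : ∀ y : V, y ∈ Φpos → s i y ≠ α i := by
      intro y hy hc
      have hyneg : y = -α i := by
        have h := congrArg (s i) hc
        rw [s_s, s_alpha_self] at h
        exact h
      rw [hyneg] at hy
      exact Φpos_neg_not (alpha_mem_Φpos i) hy
    have hmemA : ∀ y, y ∈ P ∩ Φpos → y ≠ α i → s i y ∈ P ∩ Φpos := fun y hy hyα =>
      ⟨hPstable y hy.1, s_Φpos hy.2 hyα⟩
    refine ⟨?_, ?_, ?_⟩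
    · rintro _ ⟨y, ⟨hyT, hyα⟩, rfl⟩
      exact hmemA y ⟨hyT.2, hpb.1 hyT.1⟩ (by simpa using hyα)
    · -- closedness
      rintro _ ⟨a0, ⟨haT, haα⟩, rfl⟩ _ ⟨b0, ⟨hbT, hbα⟩, rfl⟩ x ⟨hx1, hx2⟩
      obtain ⟨r, u, hr, hu, hx⟩ := mem_nnspan_pair.mp hx1
      have hx' : x = r • s i a0 + u • s i b0 := by simpa using hx
      have haα' : a0 ≠ α i := by simpa using haα
      have hbα' : b0 ≠ α i := by simpa using hbα
      have ha0pos : a0 ∈ Φpos := hpb.1 haT.1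
      have hb0pos : b0 ∈ Φpos := hpb.1 hbT.1
      have hxα : x ≠ α i := by
        intro hc
        exact alpha_not_combo (s_Φpos ha0pos haα') (s_Φpos hb0pos hbα')
          (hsne a0 ha0pos) (hsne b0 hb0pos) hr hu (hc ▸ hx')
      have hsx : s i x = r • a0 + u • b0 := by
        rw [hx', map_add, map_smul, map_smul, s_s, s_s]
      have hsxA : s i x ∈ P ∩ Φpos := ⟨hPstable x hx2.1, s_Φpos hx2.2 hxα⟩
      have hsxT : s i x ∈ R ∩ P :=
        hTcl a0 haT b0 hbT ⟨mem_nnspan_pair.mpr ⟨r, u, hr, hu, hsx⟩, hsxA⟩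
      refine ⟨s i x, ⟨hsxT, ?_⟩, s_s i x⟩
      simpa using hsne x hx2.2
    · -- coclosedness
      intro a ha b hb x ⟨hx1, hx2⟩
      refine ⟨hx2, ?_⟩
      rintro ⟨y, ⟨hyT, hyα⟩, hxy⟩
      have hyα' : y ≠ α i := by simpa using hyα
      have hypos : y ∈ Φpos := hpb.1 hyT.1
      obtain ⟨r, u, hr, hu, hx⟩ := mem_nnspan_pair.mp hx1
      have hX : s i y = r • a + u • b := by
        rw [show s i y = x from by rw [← hxy]]
        exact hx
      obtain ⟨haA, haN⟩ := ha
      obtain ⟨hbA, hbN⟩ := hb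
      have hsiyA : s i y ∈ P ∩ Φpos := by
        rw [show s i y = x from by rw [← hxy]]
        exact hx2
      have hout : ∀ z, z ∈ P ∩ Φpos → z ∉ (fun x => s i x) '' ((R ∩ P) \ {α i}) →
          z ≠ α i → s i z ∈ (P ∩ Φpos) \ (R ∩ P) := by
        intro z hzA hzN hzα
        refine ⟨⟨hPstable z hzA.1, s_Φpos hzA.2 hzα⟩, ?_⟩
        intro hzT
        exact hzN ⟨s i z, ⟨hzT, by simpa using hsne z hzA.2⟩, s_s i z⟩
      -- helper for the degenerate case x = t • α i
      have hdeg : ∀ t : ℝ, s i y = t • α i → False := by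
        intro t ht
        exact hsne y hypos (Φpos_scaled hsiyA.2 ht)
      -- helper for the mixed case
      have hmix : ∀ (c0 : V) (r0 u0 : ℝ), 0 ≤ r0 → 0 < u0 → c0 ∈ P ∩ Φpos → c0 ≠ α i →
          c0 ∉ (fun x => s i x) '' ((R ∩ P) \ {α i}) →
          s i y = r0 • α i + u0 • c0 → False := by
        intro c0 r0 u0 hr0 hu0 hc0A hc0α hc0N hcomb
        have hy2 : u0 • s i c0 = y + r0 • α i := by
          have h := congrArg (s i) hcomb
          rw [s_s, map_add, map_smul, map_smul, s_alpha_self] at h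
          rw [h]
          module
        have hsc : s i c0 = u0⁻¹ • y + (r0 * u0⁻¹) • α i := by
          rw [← inv_smul_smul₀ (ne_of_gt hu0) (s i c0), hy2]
          rw [smul_add, smul_smul]
          ring_nf
        have hscA : s i c0 ∈ P ∩ Φpos := ⟨hPstable c0 hc0A.1, s_Φpos hc0A.2 hc0α⟩
        have hscT : s i c0 ∈ R ∩ P :=
          hTcl y hyT (α i) ⟨hi, hαP⟩
            ⟨mem_nnspan_pair.mpr ⟨u0⁻¹, r0 * u0⁻¹, by positivity, by positivity, hsc⟩, hscA⟩
        exact hc0N ⟨s i c0, ⟨hscT, by simpa using hsne c0 hc0A.2⟩, s_s i c0⟩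
      rcases eq_or_ne a (α i) with rfl | haα
      · rcases eq_or_ne b (α i) with rfl | hbα
        · exact hdeg (r + u) (by rw [hX, ← add_smul])
        · rcases eq_or_lt_of_le hu with hu0 | hu0
          · exact hdeg r (by rw [hX, ← hu0, zero_smul, add_zero])
          · exact hmix b r u hr hu0 hbA hbα hbN hX
      · rcases eq_or_ne b (α i) with rfl | hbα
        · rcases eq_or_lt_of_le hr with hr0 | hr0
          · exact hdeg u (by rw [hX, ← hr0, zero_smul, zero_add])
          · exact hmix a u r hu hr0 haA haα haN (by rw [hX]; module)
        · -- generic case: use coclosedness of R ∩ P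
          have haAT : s i a ∈ (P ∩ Φpos) \ (R ∩ P) := hout a haA haN haα
          have hbAT : s i b ∈ (P ∩ Φpos) \ (R ∩ P) := hout b hbA hbN hbα
          have hyc : y = r • s i a + u • s i b := by
            have h := congrArg (s i) hX
            rw [s_s, map_add, map_smul, map_smul] at h
            exact h
          have hyA : y ∈ P ∩ Φpos := ⟨hyT.2, hypos⟩
          have := hTcc (s i a) haAT (s i b) hbAT
            ⟨mem_nnspan_pair.mpr ⟨r, u, hr, hu, hyc⟩, hyA⟩
          exact this.2 hyT
  · -- Case 1 : transport along s i
    set Qp := (fun x => s i x) '' P with hQpdef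
    have hQp : IsRank2Parabolic Qp := parabolic_image hP (s_mem_W i)
    have hffx : ∀ x : V, s i (s i x) = x := s_s i
    have hαQ : α i ∉ Qp := by
      rintro ⟨y, hyP, hy⟩
      have : y = -α i := by
        have := congrArg (s i) hy
        rw [hffx, s_alpha_self] at this
        exact this
      rw [this] at hyP
      exact hαP (by simpa using parabolic_neg hP _ hyP)
    have h2 : P ∩ Φpos = (fun x => s i x) '' (Qp ∩ Φpos) := by
      apply Set.Subset.antisymm
      · rintro x ⟨hx1, hx2⟩
        have hxα : x ≠ α i := fun h => hαP (h ▸ hx1)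
        exact ⟨s i x, ⟨⟨x, hx1, rfl⟩, s_Φpos hx2 hxα⟩, hffx x⟩
      · rintro _ ⟨y, ⟨hy1, hy2⟩, rfl⟩
        have hyα : y ≠ α i := fun h => hαQ (h ▸ hy1)
        obtain ⟨x₀, hx₀, hx₀e⟩ := hy1
        refine ⟨?_, s_Φpos hy2 hyα⟩
        show s i y ∈ P
        have hsy : s i y = x₀ := by
          have : s i ((fun x => s i x) x₀) = x₀ := hffx x₀
          rw [hx₀e] at this
          exact this
        rw [hsy]
        exact hx₀
    have h1 : ((fun x => s i x) '' (R \ {α i})) ∩ P = (fun x => s i x) '' (R ∩ Qp) := by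
      apply Set.Subset.antisymm
      · rintro x ⟨hx1, hx2⟩
        obtain ⟨y, ⟨hyR, _⟩, rfl⟩ := hx1
        refine ⟨y, ⟨hyR, ?_⟩, rfl⟩
        show y ∈ Qp
        have : y = s i (s i y) := (hffx y).symm
        rw [this]
        exact ⟨s i y, hx2, rfl⟩
      · rintro _ ⟨y, ⟨hyR, hyQ⟩, rfl⟩
        have hyα : y ≠ α i := fun h => hαQ (h ▸ hyQ)
        refine ⟨⟨y, ⟨hyR, by simpa using hyα⟩, rfl⟩, ?_⟩
        obtain ⟨x₀, hx₀, hx₀e⟩ := hyQ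
        show s i y ∈ P
        have hsy : s i y = x₀ := by
          have : s i ((fun x => s i x) x₀) = x₀ := hffx x₀
          rw [hx₀e] at this
          exact this
        rw [hsy]
        exact hx₀
    rw [h1, h2]
    exact biclosedIn_image (s i) (hpb.2 Qp hQp)
-- Chunk 8: main induction and the theorem
lemma s_ne_one (i : Fin 3) : s i ≠ 1 := by
  intro hcon
  have h1 : s i (α i) = α i := by rw [hcon]; rfl
  rw [s_alpha_self] at h1
  have h2 := congrFun h1 i
  have h3 : α i i = 1 := by rw [alpha_apply, if_pos rfl]
  have h4 : (-α i) i = -(α i i) := rfl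
  rw [h4, h3] at h2
  norm_num at h2

lemma main_fwd : ∀ (n : ℕ) (R : Set V), IsParabolicBiclosed R → R.Finite → R.Nonempty →
    R.ncard = n → ∃ w : V ≃ₗ[ℝ] V, w ∈ W ∧ w ≠ 1 ∧ R = Inversions w := by
  intro n
  induction n using Nat.strong_induction_on with
  | _ n ih =>
    intro R hpb hfin hne hcard
    obtain ⟨i, hi⟩ := exists_simple hpb hne
    set R' := (fun x => s i x) '' (R \ {α i}) with hR'
    have hpb' : IsParabolicBiclosed R' := reflect_pb hpb hi
    have hfin' : R'.Finite := hfin.diff.image _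
    have hinj : Function.Injective (fun x => s i x) := (s i).injective
    have hcard' : R'.ncard = n - 1 := by
      rw [hR', Set.ncard_image_of_injective _ hinj,
        Set.ncard_diff_singleton_of_mem hi, hcard]
    have hn1 : 1 ≤ n := by
      rw [← hcard]
      exact (Set.ncard_pos hfin).mpr hne
    rcases Set.eq_empty_or_nonempty R' with hR'e | hR'ne
    · -- R = {α i}, witness s i
      have hRs : R = {α i} := by
        ext x
        constructor
        · intro hx
          by_contra hxα
          have hxm : x ∈ R \ {α i} := ⟨hx, hxα⟩
          have : (fun x => s i x) x ∈ R' := Set.mem_image_of_mem _ hxm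
          rw [hR'e] at this
          exact this
        · intro hx
          rw [hx]
          exact hi
      refine ⟨s i, s_mem_W i, s_ne_one i, ?_⟩
      have hrec : Inversions (s i) = insert (α i) ((fun x => s i x) '' Inversions 1) := by
        have h := inv_rec_eq (i := i) (one_mem W)
          (by rw [inversions_one]; exact Set.notMem_empty _)
        rw [mul_one] at h
        exact h
      rw [hRs, hrec, inversions_one, Set.image_empty]
      simp
    · -- inductive step
      obtain ⟨w', hw'W, hw'ne, hR'inv⟩ := ih (n - 1) (by omega) R' hpb' hfin' hR'ne hcard'
      have hαR' : α i ∉ R' := by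
        rintro ⟨y, ⟨hyR, _⟩, hy⟩
        have hyn : y = -α i := by
          have h := congrArg (s i) hy
          rw [s_s, s_alpha_self] at h
          exact h
        rw [hyn] at hyR
        exact Φpos_neg_not (alpha_mem_Φpos i) (hpb.1 hyR)
      have hαinv : α i ∉ Inversions w' := hR'inv ▸ hαR'
      refine ⟨s i * w', mul_mem (s_mem_W i) hw'W, ?_, ?_⟩
      · intro hcon
        have hempty : Inversions (s i * w') = ∅ := by rw [hcon, inversions_one]
        have hmem : α i ∈ Inversions (s i * w') := by
          rw [inv_rec_eq hw'W hαinv]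
          exact Set.mem_insert _ _
        rw [hempty] at hmem
        exact hmem
      · rw [inv_rec_eq hw'W hαinv, ← hR'inv, hR', Set.image_image]
        have himg : (fun x => s i (s i x)) '' (R \ {α i}) = R \ {α i} := by
          have hfun : (fun x : V => s i (s i x)) = fun x => x := funext (s_s i)
          rw [hfun, Set.image_id']
        rw [himg, Set.insert_diff_singleton, Set.insert_eq_of_mem hi]

/-- A parabolic biclosed set `R ⊆ Φ⁺` is finite and nonempty iff it is the inversion
set of some nonidentity element of `W`. -/
theorem parabolic_biclosed_finite_iff_inversion_set (R : Set V)
    (hR : IsParabolicBiclosed R) :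
    (R.Finite ∧ R.Nonempty) ↔ ∃ w : V ≃ₗ[ℝ] V, w ∈ W ∧ w ≠ 1 ∧ R = Inversions w := by
  constructor
  · rintro ⟨hfin, hne⟩
    exact main_fwd R.ncard R hR hfin hne rfl
  · rintro ⟨w, hwW, hwne, rfl⟩
    exact ⟨inversions_finite hwW, inversions_nonempty hwW hwne⟩
end
end
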